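/- Let {P_n}_{n≥0} be a monic PS that is an OPS with respect to some linear functional u_0, and suppose that the monic PS {P^{[1]}_n}_{n≥0}, where P^{[1]}_n := (n+1)^{-1} D_ω P_{n+1}, is also an OPS. For k ≥ 1 define P^{[k]}_n := (n+1)^{-1} D_ω P^{[k−1]}_{n+1} (so that P^{[k]}_n = (1/(n+1)_k) D_ω^k P_{n+k}). Then for every k ≥ 1 the sequence {P^{[k]}_n}_{n≥0} is an OPS, and moreover its normalized D_ω-derivative sequence {P^{[k+1]}_n}_{n≥0} is also an OPS; that is, each {P^{[k]}_n}_{n≥0} is a D_ω-classical OPS. -/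

import Mathlib

open Polynomial

/-- The Hahn difference operator `D_ω` acting on polynomials:
`(D_ω f)(x) = (f(x+ω) − f(x))/ω`. -/
noncomputable def Dw (ω : ℂ) (f : Polynomial ℂ) : Polynomial ℂ :=
  C ω⁻¹ * (f.comp (X + C ω) - f)

/-- A monic polynomial sequence: each `P n` is monic of degree `n`. -/
def MonicPS (P : ℕ → Polynomial ℂ) : Prop :=
  ∀ n, (P n).Monic ∧ (P n).natDegree = n

/-- Three-term recurrence with coefficients `β`, `γ` (where `γ (n+1)` is used). -/
def TTR (P : ℕ → Polynomial ℂ) (β γ : ℕ → ℂ) : Prop :=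
  P 0 = 1 ∧ P 1 = X - C (β 0) ∧
    ∀ n : ℕ, P (n + 2) = (X - C (β (n + 1))) * P (n + 1) - C (γ (n + 1)) * P n

/-- Orthogonality of a polynomial sequence with respect to a linear functional. -/
def IsOPSwrt (P : ℕ → Polynomial ℂ) (u : Polynomial ℂ →ₗ[ℂ] ℂ) : Prop :=
  (∀ n m, n ≠ m → u (P n * P m) = 0) ∧ ∀ n, u (P n * P n) ≠ 0

set_option linter.unreachableTactic false
set_option linter.unusedTactic false


lemma natCast_succ_ne (n : ℕ) : ((n:ℂ)+1) ≠ 0 := by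
  exact_mod_cast Nat.cast_add_one_ne_zero (R := ℂ) n

lemma Dw_add (ω : ℂ) (f g : Polynomial ℂ) : Dw ω (f+g) = Dw ω f + Dw ω g := by
  unfold Dw; rw [add_comp]; ring

lemma Dw_smul (ω : ℂ) (c : ℂ) (f : Polynomial ℂ) : Dw ω (c • f) = c • Dw ω f := by
  unfold Dw; rw [smul_eq_C_mul, smul_eq_C_mul, mul_comp, C_comp]; ring

lemma Dw_mul (ω : ℂ) (f g : Polynomial ℂ) :
    Dw ω (f*g) = f.comp (X + C ω) * Dw ω g + Dw ω f * g := by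
  unfold Dw; rw [mul_comp]; ring

noncomputable def DwL (ω : ℂ) : Polynomial ℂ →ₗ[ℂ] Polynomial ℂ where
  toFun := Dw ω
  map_add' := Dw_add ω
  map_smul' := Dw_smul ω

lemma Dw_coeff (ω : ℂ) (hω : ω ≠ 0) (f : Polynomial ℂ) (d : ℕ) (h : f.natDegree ≤ d+1) :
    (Dw ω f).coeff d = ((d:ℂ)+1) * f.coeff (d+1) := by
  have hh : hasseDeriv d f = C (f.coeff d) + C (((d:ℂ)+1) * f.coeff (d+1)) * X := by
    ext m
    rw [hasseDeriv_coeff]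
    match m with
    | 0 => simp
    | 1 =>
      rw [Nat.add_comm 1 d, Nat.choose_succ_self_right]
      simp [coeff_C, coeff_C_mul, coeff_X]
    | (m+2) =>
      have h0 : f.coeff (m + 2 + d) = 0 := by
        apply coeff_eq_zero_of_natDegree_lt; omega
      simp [h0, coeff_C, coeff_C_mul, coeff_X, coeff_one]
  unfold Dw
  rw [← taylor_apply, coeff_C_mul, coeff_sub, taylor_coeff, hh]
  simp
  field_simp

lemma Dw_natDegree_le (ω : ℂ) (hω : ω ≠ 0) (f : Polynomial ℂ) (d : ℕ) (h : f.natDegree ≤ d+1) :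
    (Dw ω f).natDegree ≤ d := by
  apply natDegree_le_iff_coeff_eq_zero.2
  intro k hk
  rw [Dw_coeff ω hω f k (le_trans h (by omega))]
  rw [coeff_eq_zero_of_natDegree_lt (by omega), mul_zero]

lemma coeff_mul_le (p q : Polynomial ℂ) (a b : ℕ) (hp : p.natDegree ≤ a) (hq : q.natDegree ≤ b) :
    (p*q).coeff (a+b) = p.coeff a * q.coeff b := by
  rw [coeff_mul]
  apply Finset.sum_eq_single (a, b)
  · rintro ⟨i, j⟩ hij hne
    rw [Finset.HasAntidiagonal.mem_antidiagonal] at hij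
    rcases lt_or_ge a i with h' | h'
    · rw [coeff_eq_zero_of_natDegree_lt (lt_of_le_of_lt hp h'), zero_mul]
    · have : b < j := by
        rcases lt_or_eq_of_le h' with h'' | h''
        · omega
        · exact absurd (by simp [h'']; omega : (i, j) = (a, b)) hne
      rw [coeff_eq_zero_of_natDegree_lt (lt_of_le_of_lt hq this), mul_zero]
  · intro h; exact absurd (Finset.HasAntidiagonal.mem_antidiagonal.2 (rfl : a + b = a + b)) h

lemma monic_smul_Dw (ω : ℂ) (hω : ω ≠ 0) (f : Polynomial ℂ) (d : ℕ)
    (hf : f.Monic) (hd : f.natDegree = d+1) :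
    (((d:ℂ)+1)⁻¹ • Dw ω f).Monic ∧ (((d:ℂ)+1)⁻¹ • Dw ω f).natDegree = d := by
  have hc : (((d:ℂ)+1)⁻¹ • Dw ω f).coeff d = 1 := by
    rw [coeff_smul, Dw_coeff ω hω f d (le_of_eq hd), smul_eq_mul, ← hd]
    have : f.coeff f.natDegree = 1 := hf
    rw [this]
    field_simp
  have hle : (((d:ℂ)+1)⁻¹ • Dw ω f).natDegree ≤ d := by
    apply le_trans (natDegree_smul_le _ _) (Dw_natDegree_le ω hω f d (le_of_eq hd))
  have hdeg : (((d:ℂ)+1)⁻¹ • Dw ω f).natDegree = d := by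
    apply le_antisymm hle
    by_contra h
    rw [coeff_eq_zero_of_natDegree_lt (by omega)] at hc
    exact one_ne_zero hc.symm
  exact ⟨by rwa [Monic, leadingCoeff, hdeg], hdeg⟩

lemma ops_eval (S : ℕ → Polynomial ℂ) (hS : MonicPS S) (u : Polynomial ℂ →ₗ[ℂ] ℂ)
    (horth : ∀ n m, n ≠ m → u (S n * S m) = 0) :
    ∀ (d : ℕ) (f : Polynomial ℂ), f.natDegree ≤ d → ∀ n, d ≤ n →
      u (S n * f) = f.coeff n * u (S n * S n) := by
  intro d
  induction d using Nat.strong_induction_on with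
  | _ d IH =>
    intro f hf n hn
    by_cases hf0 : f = 0
    · simp [hf0]
    set e := f.natDegree with he
    set c := f.coeff e with hc
    set g := f - C c * S e with hg
    have hfg : f = C c * S e + g := by rw [hg]; ring
    have hSe : (S e).natDegree = e := (hS e).2
    have hgle : g.natDegree ≤ e := by
      apply le_trans (natDegree_sub_le _ _)
      exact max_le le_rfl (le_trans (natDegree_C_mul_le _ _) (le_of_eq hSe))
    have hSe1 : (S e).coeff e = 1 := by
      have := (hS e).1.coeff_natDegree
      rwa [hSe] at this
    have hgc : g.coeff e = 0 := by
      rw [hg, coeff_sub, coeff_C_mul, hSe1, mul_one, ← hc, sub_self]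
    have hgsmall : g = 0 ∨ g.natDegree < e := by
      rcases eq_or_ne g 0 with h | h
      · exact Or.inl h
      · right
        rcases lt_or_eq_of_le hgle with h' | h'
        · exact h'
        · exfalso
          have : g.leadingCoeff = 0 := by rw [leadingCoeff, h', hgc]
          exact h (leadingCoeff_eq_zero.1 this)
    have key1 : u (S n * (C c * S e)) = c * u (S n * S e) := by
      have : S n * (C c * S e) = c • (S n * S e) := by
        rw [smul_eq_C_mul]; ring
      rw [this, map_smul, smul_eq_mul]
    have key2 : u (S n * g) = g.coeff n * u (S n * S n) := by
      rcases hgsmall with h | h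
      · simp [h]
      · exact IH g.natDegree (by omega) g le_rfl n (by omega)
    have hexp : u (S n * f) = c * u (S n * S e) + g.coeff n * u (S n * S n) := by
      rw [hfg, mul_add, map_add, key1, key2]
    have hgcn : g.coeff n = f.coeff n - c * (S e).coeff n := by
      rw [hg, coeff_sub, coeff_C_mul]
    rcases eq_or_lt_of_le (le_trans hf hn) with hee | hee
    · rw [hexp, hgcn, ← hee, hSe1]
      ring
    · have hoth : u (S n * S e) = 0 := horth n e (by omega)
      have : (S e).coeff n = 0 := coeff_eq_zero_of_natDegree_lt (by omega)
      rw [hexp, hgcn, hoth, this]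
      ring

lemma func_ext (S : ℕ → Polynomial ℂ) (hS : MonicPS S) (lam mu : Polynomial ℂ →ₗ[ℂ] ℂ)
    (h : ∀ n, lam (S n) = mu (S n)) : ∀ f, lam f = mu f := by
  suffices H : ∀ (d : ℕ) (f : Polynomial ℂ), f.natDegree ≤ d → lam f = mu f by
    intro f; exact H f.natDegree f le_rfl
  intro d
  induction d using Nat.strong_induction_on with
  | _ d IH =>
    intro f hf
    by_cases hf0 : f = 0
    · simp [hf0]
    set e := f.natDegree with he
    set c := f.coeff e with hc
    set g := f - C c * S e with hg
    have hfg : f = C c * S e + g := by rw [hg]; ring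
    have hSe : (S e).natDegree = e := (hS e).2
    have hgle : g.natDegree ≤ e := by
      apply le_trans (natDegree_sub_le _ _)
      exact max_le le_rfl (le_trans (natDegree_C_mul_le _ _) (le_of_eq hSe))
    have hSe1 : (S e).coeff e = 1 := by
      have := (hS e).1.coeff_natDegree
      rwa [hSe] at this
    have hgc : g.coeff e = 0 := by
      rw [hg, coeff_sub, coeff_C_mul, hSe1, mul_one, ← hc, sub_self]
    have hgsmall : g = 0 ∨ g.natDegree < e := by
      rcases eq_or_ne g 0 with h' | h'
      · exact Or.inl h'
      · right
        rcases lt_or_eq_of_le hgle with h'' | h''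
        · exact h''
        · exfalso
          have : g.leadingCoeff = 0 := by rw [leadingCoeff, h'', hgc]
          exact h' (leadingCoeff_eq_zero.1 this)
    have hgeq : lam g = mu g := by
      rcases hgsmall with h' | h'
      · simp [h']
      · exact IH g.natDegree (by omega) g le_rfl
    have hCs : ∀ (nu : Polynomial ℂ →ₗ[ℂ] ℂ), nu (C c * S e) = c * nu (S e) := by
      intro nu
      rw [← smul_eq_C_mul, map_smul, smul_eq_mul]
    rw [hfg, map_add, map_add, hCs, hCs, hgeq, h e]

lemma func_sum (mu : Polynomial ℂ →ₗ[ℂ] ℂ) (f : Polynomial ℂ) (d : ℕ) (h : f.natDegree ≤ d) :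
    mu f = ∑ j ∈ Finset.range (d+1), f.coeff j * mu (X^j) := by
  conv_lhs => rw [f.as_sum_range' (d+1) (by omega)]
  rw [map_sum]
  apply Finset.sum_congr rfl
  intro j _
  rw [← smul_X_eq_monomial, map_smul, smul_eq_mul]

lemma Dw_one (ω : ℂ) : Dw ω 1 = 0 := by unfold Dw; simp

lemma step_lemma (ω : ℂ) (hω : ω ≠ 0) (P Q R : ℕ → Polynomial ℂ)
    (hP : MonicPS P) (hQ : MonicPS Q) (hR : MonicPS R)
    (u v : Polynomial ℂ →ₗ[ℂ] ℂ) (φ ψ : Polynomial ℂ)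
    (hu : IsOPSwrt P u) (hv : IsOPSwrt Q v)
    (hvu : ∀ f, v f = u (φ * f))
    (hPear : ∀ f, u (φ * Dw ω f) = u (ψ * f))
    (hφ : φ.natDegree ≤ 2) (hψ : ψ.natDegree ≤ 1)
    (hPQ : ∀ n, Dw ω (P (n+1)) = ((n:ℂ)+1) • Q n)
    (hQR : ∀ n, Dw ω (Q (n+1)) = ((n:ℂ)+1) • R n) :
    ∃ w : Polynomial ℂ →ₗ[ℂ] ℂ, IsOPSwrt R w ∧
      (∀ f, w f = v (φ.comp (X + C ω) * f)) ∧
      (∀ f, v (φ.comp (X + C ω) * Dw ω f) = v ((ψ - Dw ω φ) * f)) ∧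
      (φ.comp (X + C ω)).natDegree ≤ 2 ∧ (ψ - Dw ω φ).natDegree ≤ 1 := by
  set κ := ψ.coeff 1 with hκ
  set a := φ.coeff 2 with ha
  set φτ := φ.comp (X + C ω) with hφτ
  -- v ∘ Dw = u (ψ ·)
  have hvD : ∀ f, v (Dw ω f) = u (ψ * f) := fun f => by rw [hvu]; exact hPear f
  -- core computation
  have core : ∀ (g h : Polynomial ℂ),
      v (g.comp (X + C ω) * Dw ω h) = u ((ψ * g) * h) - v ((Dw ω g) * h) := by
    intro g h
    have e1 : g.comp (X + C ω) * Dw ω h = Dw ω (g * h) - (Dw ω g) * h := by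
      rw [Dw_mul]; ring
    rw [e1, map_sub, hvD]
    congr 2
    ring
  -- the auxiliary monic polynomials (X - Cω)^m
  set M : ℕ → Polynomial ℂ := fun m => (X - C ω)^m with hM
  have hMτ : ∀ m, (M m).comp (X + C ω) = X^m := by
    intro m
    rw [hM]
    rw [pow_comp, sub_comp, X_comp, C_comp]
    congr 1
    ring
  have hMdeg : ∀ m, (M m).natDegree = m := by
    intro m; rw [hM]; simp [natDegree_pow]
  have hMc : ∀ m, (M m).coeff m = 1 := by
    intro m
    have hm : (M m).Monic := (monic_X_sub_C ω).pow m
    have := hm.coeff_natDegree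
    rwa [hMdeg] at this
  have hDM : ∀ m, (Dw ω (M (m+1))).natDegree ≤ m :=
    fun m => Dw_natDegree_le ω hω _ m (le_of_eq (hMdeg (m+1)))
  -- admissibility: κ - n • a ≠ 0 for all n
  have adm : ∀ n : ℕ, κ - (n:ℂ) * a ≠ 0 := by
    intro n
    have hcore := core (M n) (P (n+1))
    rw [hMτ n] at hcore
    have hBu : v (X^n * Dw ω (P (n+1))) = u ((ψ * M n - φ * Dw ω (M n)) * P (n+1)) := by
      rw [hcore, hvu ((Dw ω (M n)) * P (n+1)), ← map_sub]
      congr 1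
      ring
    -- LHS
    have hL : v (X^n * Dw ω (P (n+1))) = ((n:ℂ)+1) * v (Q n * Q n) := by
      rw [hPQ n, mul_smul_comm, map_smul, smul_eq_mul]
      congr 1
      rw [mul_comm]
      rw [ops_eval Q hQ v hv.1 n (X^n) (le_of_eq (natDegree_X_pow n)) n le_rfl]
      simp [coeff_X_pow]
    -- B bounds
    set B := ψ * M n - φ * Dw ω (M n) with hB
    have hBdeg : B.natDegree ≤ n + 1 := by
      apply le_trans (natDegree_sub_le _ _)
      apply max_le
      · exact le_trans (natDegree_mul_le) (by rw [hMdeg n]; omega)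
      · match n with
        | 0 => rw [show M 0 = 1 from pow_zero _, Dw_one]; simp
        | (m+1) =>
          exact le_trans (natDegree_mul_le) (by have := hDM m; omega)
    have hBcoeff : B.coeff (n+1) = κ - (n:ℂ) * a := by
      rw [hB, coeff_sub]
      have e1 : (ψ * M n).coeff (n+1) = κ := by
        have : n + 1 = 1 + n := by omega
        rw [this, coeff_mul_le ψ (M n) 1 n hψ (le_of_eq (hMdeg n)), hMc n, mul_one]
      have e2 : (φ * Dw ω (M n)).coeff (n+1) = (n:ℂ) * a := by
        cases n with
        | zero => rw [show M 0 = 1 from pow_zero _, Dw_one]; simp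
        | succ m =>
          have : m + 1 + 1 = 2 + m := by omega
          rw [this, coeff_mul_le φ _ 2 m hφ (hDM m)]
          rw [Dw_coeff ω hω _ m (le_of_eq (hMdeg (m+1))), hMc (m+1)]
          push_cast
          ring
      rw [e1, e2]
    have hR2 : u ((ψ * M n - φ * Dw ω (M n)) * P (n+1)) = (κ - (n:ℂ)*a) * u (P (n+1) * P (n+1)) := by
      rw [mul_comm]
      rw [ops_eval P hP u hu.1 (n+1) B hBdeg (n+1) le_rfl, hBcoeff]
    intro hcontra
    have := hL.symm.trans (hBu.trans hR2)
    rw [hcontra, zero_mul] at this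
    exact (mul_ne_zero (natCast_succ_ne n) (hv.2 n)) this
  -- define w
  set w : Polynomial ℂ →ₗ[ℂ] ℂ := v.comp (LinearMap.mulLeft ℂ φτ) with hw
  have hwf : ∀ f, w f = v (φτ * f) := fun f => rfl
  -- key identity for w
  have worth : ∀ m n : ℕ, m ≤ n →
      ((n:ℂ)+1) * w (X^m * R n) =
        (ψ * M m - Dw ω (φ * M m)).coeff (n+1) * v (Q (n+1) * Q (n+1)) := by
    intro m n hmn
    have e0 : X^m * Dw ω (Q (n+1)) = ((n:ℂ)+1) • (X^m * R n) := by
      rw [hQR n, mul_smul_comm]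
    have e1 : ((n:ℂ)+1) * w (X^m * R n) = v (φτ * (X^m * Dw ω (Q (n+1)))) := by
      rw [e0, mul_smul_comm, map_smul, smul_eq_mul, hwf]
    have e2 : φτ * (X^m * Dw ω (Q (n+1))) = (φ * M m).comp (X + C ω) * Dw ω (Q (n+1)) := by
      rw [mul_comp, hMτ m, hφτ, mul_assoc]
    have e3 : u ((ψ * (φ * M m)) * Q (n+1)) = v ((ψ * M m) * Q (n+1)) := by
      rw [hvu]
      congr 1
      ring
    set B := ψ * M m - Dw ω (φ * M m) with hB
    have e4 : v (φτ * (X^m * Dw ω (Q (n+1)))) = v (B * Q (n+1)) := by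
      rw [e2, core (φ * M m) (Q (n+1)), e3, ← map_sub, hB]
      congr 1
      ring
    have hBdeg : B.natDegree ≤ m + 1 := by
      apply le_trans (natDegree_sub_le _ _)
      apply max_le
      · exact le_trans (natDegree_mul_le) (by rw [hMdeg m]; omega)
      · apply Dw_natDegree_le ω hω _ (m+1)
        exact le_trans (natDegree_mul_le) (by rw [hMdeg m]; omega)
    rw [e1, e4, mul_comm B _]
    exact ops_eval Q hQ v hv.1 (n+1) B (by omega) (n+1) le_rfl
  -- orthogonality: m < n case
  have worth0 : ∀ m n : ℕ, m < n → w (X^m * R n) = 0 := by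
    intro m n hmn
    have h1 := worth m n (by omega)
    have hc0 : (ψ * M m - Dw ω (φ * M m)).coeff (n+1) = 0 := by
      apply coeff_eq_zero_of_natDegree_lt
      have hBdeg : (ψ * M m - Dw ω (φ * M m)).natDegree ≤ m + 1 := by
        apply le_trans (natDegree_sub_le _ _)
        apply max_le
        · exact le_trans (natDegree_mul_le) (by rw [hMdeg m]; omega)
        · apply Dw_natDegree_le ω hω _ (m+1)
          exact le_trans (natDegree_mul_le) (by rw [hMdeg m]; omega)
      omega
    rw [hc0, zero_mul] at h1
    exact (mul_eq_zero.1 h1).resolve_left (natCast_succ_ne n)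
  -- diagonal case
  have worthd : ∀ n : ℕ, w (X^n * R n) ≠ 0 := by
    intro n
    have h1 := worth n n le_rfl
    have hcoeff : (ψ * M n - Dw ω (φ * M n)).coeff (n+1) = κ - ((n:ℂ)+2) * a := by
      rw [coeff_sub]
      have e1 : (ψ * M n).coeff (n+1) = κ := by
        have : n + 1 = 1 + n := by omega
        rw [this, coeff_mul_le ψ (M n) 1 n hψ (le_of_eq (hMdeg n)), hMc n, mul_one]
      have e2 : (Dw ω (φ * M n)).coeff (n+1) = ((n:ℂ)+2) * a := by
        rw [Dw_coeff ω hω _ (n+1) (le_trans natDegree_mul_le (by rw [hMdeg n]; omega))]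
        have : n + 1 + 1 = 2 + n := by omega
        rw [this, coeff_mul_le φ (M n) 2 n hφ (le_of_eq (hMdeg n)), hMc n, mul_one]
        push_cast
        ring
      rw [e1, e2]
    have hne : κ - ((n:ℂ)+2) * a ≠ 0 := by
      have := adm (n+2)
      push_cast at this
      convert this using 2 <;> try ring
    rw [hcoeff] at h1
    intro hcontra
    rw [hcontra, mul_zero] at h1
    exact (mul_ne_zero hne (hv.2 (n+1))) h1.symm
  refine ⟨w, ⟨?_, ?_⟩, hwf, ?_, ?_, ?_⟩
  · -- orthogonality off-diagonal
    have main : ∀ m n : ℕ, m < n → w (R n * R m) = 0 := by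
      intro m n hmn
      have hsum : w (R n * R m) = ∑ j ∈ Finset.range (m+1), (R m).coeff j * w (R n * X^j) :=
        func_sum (w.comp (LinearMap.mulLeft ℂ (R n))) (R m) m (le_of_eq (hR m).2)
      rw [hsum]
      apply Finset.sum_eq_zero
      intro j hj
      rw [Finset.mem_range] at hj
      rw [mul_comm (R n), worth0 j n (by omega), mul_zero]
    intro n m hnm
    rcases lt_or_gt_of_ne hnm with h | h
    · rw [mul_comm]; exact main n m h
    · exact main m n h
  · -- diagonal nonzero
    intro n
    have hsum : w (R n * R n) = ∑ j ∈ Finset.range (n+1), (R n).coeff j * w (R n * X^j) :=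
      func_sum (w.comp (LinearMap.mulLeft ℂ (R n))) (R n) n (le_of_eq (hR n).2)
    have hRn1 : (R n).coeff n = 1 := by
      have := (hR n).1.coeff_natDegree
      rwa [(hR n).2] at this
    have hsingle : ∑ j ∈ Finset.range (n+1), (R n).coeff j * w (R n * X^j) = w (R n * X^n) := by
      rw [Finset.sum_eq_single n]
      · rw [hRn1, one_mul]
      · intro j hj hjn
        rw [Finset.mem_range] at hj
        rw [mul_comm (R n), worth0 j n (by omega), mul_zero]
      · intro h
        exact absurd (Finset.self_mem_range_succ n) h
    rw [hsum, hsingle, mul_comm]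
    exact worthd n
  · -- new Pearson equation
    intro f
    have e1 : φτ * Dw ω f = Dw ω (φ * f) - (Dw ω φ) * f := by
      rw [Dw_mul, hφτ]; ring
    rw [e1, map_sub, hvD]
    have e2 : u (ψ * (φ * f)) = v (ψ * f) := by
      rw [hvu]; congr 1; ring
    rw [e2, ← map_sub]
    congr 1
    ring
  · -- degree of φτ
    rw [hφτ, ← taylor_apply, natDegree_taylor]
    exact hφ
  · -- degree of ψ - Dw φ
    apply le_trans (natDegree_sub_le _ _)
    exact max_le hψ (Dw_natDegree_le ω hω φ 1 hφ)

lemma Dw_X (ω : ℂ) (hω : ω ≠ 0) : Dw ω X = 1 := by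
  unfold Dw
  rw [X_comp]
  have : X + C ω - X = C ω := by ring
  rw [this, ← C_mul, inv_mul_cancel₀ hω, C_1]

lemma monic_deg_zero_eq_one (p : Polynomial ℂ) (hm : p.Monic) (hd : p.natDegree = 0) : p = 1 := by
  have := eq_C_of_natDegree_eq_zero hd
  rw [this]
  have h1 : p.coeff 0 = 1 := by
    have := hm.coeff_natDegree
    rwa [hd] at this
  rw [h1, C_1]

lemma eq_zero_of_orth (S : ℕ → Polynomial ℂ) (hS : MonicPS S) (u : Polynomial ℂ →ₗ[ℂ] ℂ)
    (hu : IsOPSwrt S u) :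
    ∀ (N : ℕ) (f : Polynomial ℂ), f.natDegree ≤ N → (∀ j, j ≤ N → u (S j * f) = 0) → f = 0 := by
  intro N
  induction N with
  | zero =>
    intro f hf h0
    have := ops_eval S hS u hu.1 0 f hf 0 le_rfl
    rw [h0 0 le_rfl] at this
    have hc : f.coeff 0 = 0 := by
      rcases mul_eq_zero.1 this.symm with h | h
      · exact h
      · exact absurd h (hu.2 0)
    rw [eq_C_of_natDegree_eq_zero (Nat.le_zero.1 hf), hc, C_0]
  | succ N IH =>
    intro f hf h0
    have := ops_eval S hS u hu.1 (N+1) f hf (N+1) le_rfl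
    rw [h0 (N+1) le_rfl] at this
    have hc : f.coeff (N+1) = 0 := by
      rcases mul_eq_zero.1 this.symm with h | h
      · exact h
      · exact absurd h (hu.2 (N+1))
    have hfle : f.natDegree ≤ N := by
      by_contra h
      have hdeg : f.natDegree = N+1 := by omega
      have : f.leadingCoeff = 0 := by rw [leadingCoeff, hdeg, hc]
      rw [leadingCoeff_eq_zero] at this
      rw [this] at hdeg
      simp at hdeg
    exact IH f hfle (fun j hj => h0 j (by omega))

lemma ttr_exists (P : ℕ → Polynomial ℂ) (hP : MonicPS P) (u : Polynomial ℂ →ₗ[ℂ] ℂ)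
    (hu : IsOPSwrt P u) (n : ℕ) :
    ∃ b c : ℂ, P (n+2) = X * P (n+1) + C b * P (n+1) + C c * P n := by
  set T := P (n+2) - X * P (n+1) with hT
  have hTdeg : T.natDegree ≤ n + 1 := by
    apply natDegree_le_iff_coeff_eq_zero.2
    intro k hk
    match k, hk with
    | (j+1), hk =>
      rw [hT, coeff_sub, coeff_X_mul]
      rcases eq_or_lt_of_le (show n + 2 ≤ j + 1 by omega) with he | hl
      · have e1 : (P (n+2)).coeff (j+1) = 1 := by
          have h := (hP (n+2)).1.coeff_natDegree
          rw [(hP (n+2)).2] at h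
          rw [← he]; exact h
        have e2 : (P (n+1)).coeff j = 1 := by
          have h := (hP (n+1)).1.coeff_natDegree
          rw [(hP (n+1)).2] at h
          rw [show j = n + 1 by omega]; exact h
        rw [e1, e2, sub_self]
      · rw [coeff_eq_zero_of_natDegree_lt (by rw [(hP (n+2)).2]; omega),
          coeff_eq_zero_of_natDegree_lt (by rw [(hP (n+1)).2]; omega), sub_self]
  set c1 := u (T * P (n+1)) / u (P (n+1) * P (n+1)) with hc1
  set c0 := u (T * P n) / u (P n * P n) with hc0
  set f := T - C c1 * P (n+1) - C c0 * P n with hf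
  have hfdeg : f.natDegree ≤ n + 1 := by
    apply le_trans (natDegree_sub_le _ _)
    apply max_le
    · apply le_trans (natDegree_sub_le _ _)
      apply max_le hTdeg
      exact le_trans (natDegree_C_mul_le _ _) (by rw [(hP (n+1)).2])
    · exact le_trans (natDegree_C_mul_le _ _) (by rw [(hP n).2]; omega)
  have hforth : ∀ j, j ≤ n + 1 → u (P j * f) = 0 := by
    intro j hj
    have hexp : u (P j * f) = u (P j * T) - c1 * u (P j * P (n+1)) - c0 * u (P j * P n) := by
      rw [hf]
      have : P j * (T - C c1 * P (n+1) - C c0 * P n)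
          = P j * T - c1 • (P j * P (n+1)) - c0 • (P j * P n) := by
        rw [smul_eq_C_mul, smul_eq_C_mul]; ring
      rw [this, map_sub, map_sub, map_smul, map_smul, smul_eq_mul, smul_eq_mul]
    have hPT : ∀ i, i ≤ n → u (P i * T) = u (P i * P (n+2)) - (X * P i).coeff (n+1) * u (P (n+1) * P (n+1)) := by
      intro i hi
      have e0 : P i * T = P i * P (n+2) - P (n+1) * (X * P i) := by rw [hT]; ring
      rw [e0, map_sub]
      congr 1
      apply ops_eval P hP u hu.1 (n+1) (X * P i) _ (n+1) le_rfl
      apply le_trans natDegree_mul_le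
      rw [natDegree_X, (hP i).2]
      omega
    by_cases hjtop : j = n + 1
    · subst hjtop
      rw [hexp, hu.1 (n+1) n (by omega), mul_zero, sub_zero, hc1, mul_comm T (P (n+1)),
        div_mul_cancel₀ _ (hu.2 (n+1)), sub_self]
    · by_cases hjn : j = n
      · subst hjn
        have hcx : (X * P j).coeff (j+1) = 1 := by
          rw [coeff_X_mul]
          have h := (hP j).1.coeff_natDegree
          rwa [(hP j).2] at h
        have hTn : u (T * P j) = - u (P (j+1) * P (j+1)) := by
          rw [mul_comm, hPT j le_rfl, hu.1 j (j+2) (by omega), hcx]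
          ring
        rw [hexp, hPT j le_rfl, hu.1 j (j+2) (by omega), hu.1 j (j+1) (by omega), hcx,
          hc0, hTn]
        rw [div_mul_cancel₀ _ (hu.2 j)]
        ring
      · -- j < n
        rw [hexp, hPT j (by omega), hu.1 j (n+2) (by omega), hu.1 j (n+1) (by omega),
          hu.1 j n (by omega)]
        have : (X * P j).coeff (n+1) = 0 := by
          apply coeff_eq_zero_of_natDegree_lt
          apply lt_of_le_of_lt natDegree_mul_le
          rw [natDegree_X, (hP j).2]
          omega
        rw [this]
        ring
  have hf0 : f = 0 := eq_zero_of_orth P hP u hu (n+1) f hfdeg hforth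
  refine ⟨c1, c0, ?_⟩
  have : P (n+2) = X * P (n+1) + C c1 * P (n+1) + C c0 * P n + f := by rw [hf, hT]; ring
  rw [this, hf0, add_zero]


lemma Dw_C (ω : ℂ) (c : ℂ) : Dw ω (C c) = 0 := by unfold Dw; simp

lemma base_lemma (ω : ℂ) (hω : ω ≠ 0) (P Q : ℕ → Polynomial ℂ)
    (hP : MonicPS P) (hQ : MonicPS Q)
    (u v : Polynomial ℂ →ₗ[ℂ] ℂ) (hu : IsOPSwrt P u) (hv : IsOPSwrt Q v)
    (hPQ : ∀ n, Dw ω (P (n+1)) = ((n:ℂ)+1) • Q n) :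
    ∃ φ ψ : Polynomial ℂ, (∀ f, v f = u (φ * f)) ∧ (∀ f, u (φ * Dw ω f) = u (ψ * f)) ∧
      φ.natDegree ≤ 2 ∧ ψ.natDegree ≤ 1 := by
  have hP0 : P 0 = 1 := monic_deg_zero_eq_one _ (hP 0).1 (hP 0).2
  have hQ0 : Q 0 = 1 := monic_deg_zero_eq_one _ (hQ 0).1 (hQ 0).2
  have hv0 : ∀ (m : ℕ) (g : Polynomial ℂ), g.natDegree ≤ m → g.coeff m = 0 →
      v (g * Q m) = 0 := by
    intro m g h1 h2
    rw [mul_comm, ops_eval Q hQ v hv.1 m g h1 m le_rfl, h2, zero_mul]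
  -- v kills P n for n ≥ 3
  have hvPn : ∀ i : ℕ, v (P (i+3)) = 0 := by
    intro i
    obtain ⟨b, c, hbc⟩ := ttr_exists P hP u hu (i+2)
    have e : Dw ω (P (i+2+2)) = (X + C ω) * Dw ω (P (i+2+1)) + P (i+2+1)
        + C b * Dw ω (P (i+2+1)) + C c * Dw ω (P (i+2)) := by
      rw [hbc, Dw_add, Dw_add, Dw_mul, Dw_mul, Dw_mul, X_comp, C_comp, C_comp,
        Dw_X ω hω, Dw_C, Dw_C]
      ring
    have h4 : Dw ω (P (i+2+2)) = ((↑(i+2+1):ℂ)+1) • Q (i+2+1) := hPQ (i+2+1)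
    have h3 : Dw ω (P (i+2+1)) = ((↑(i+2):ℂ)+1) • Q (i+2) := hPQ (i+2)
    have h2 : Dw ω (P (i+2)) = ((↑(i+1):ℂ)+1) • Q (i+1) := hPQ (i+1)
    rw [h4, h3, h2] at e
    have keyv : P (i+2+1) = ((↑(i+2+1):ℂ)+1) • Q (i+2+1)
        - (X + C ω) * (((↑(i+2):ℂ)+1) • Q (i+2))
        - C b * (((↑(i+2):ℂ)+1) • Q (i+2))
        - C c * (((↑(i+1):ℂ)+1) • Q (i+1)) := by
      linear_combination -e
    have hfin : v (P (i+2+1)) = 0 := by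
      rw [keyv, map_sub, map_sub, map_sub, map_smul]
      have t1 : v (Q (i+2+1)) = 0 := by
        have := hv0 (i+2+1) 1 (by simp) (by simp [coeff_one])
        rwa [one_mul] at this
      have t2 : v ((X + C ω) * (((↑(i+2):ℂ)+1) • Q (i+2))) = 0 := by
        rw [mul_smul_comm, map_smul]
        rw [hv0 (i+2) (X + C ω) ?_ ?_, smul_zero]
        · exact le_trans (natDegree_add_le _ _)
            (by simp [natDegree_X, natDegree_C])
        · simp [coeff_add, coeff_X, coeff_C]
      have t3 : v (C b * (((↑(i+2):ℂ)+1) • Q (i+2))) = 0 := by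
        rw [mul_smul_comm, map_smul]
        rw [hv0 (i+2) (C b) (by simp [natDegree_C]) (by simp [coeff_C]), smul_zero]
      have t4 : v (C c * (((↑(i+1):ℂ)+1) • Q (i+1))) = 0 := by
        rw [mul_smul_comm, map_smul]
        rw [hv0 (i+1) (C c) (by simp [natDegree_C]) (by simp [coeff_C]), smul_zero]
      rw [t1, t2, t3, t4, smul_zero]
      ring
    exact hfin
  -- define φ and ψ
  set φ : Polynomial ℂ := C (v (P 0) / u (P 0 * P 0)) * P 0
      + C (v (P 1) / u (P 1 * P 1)) * P 1 + C (v (P 2) / u (P 2 * P 2)) * P 2 with hφdef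
  set ψ : Polynomial ℂ := C (v 1 / u (P 1 * P 1)) * P 1 with hψdef
  have hmul : ∀ g, u (φ * g) = v (P 0) / u (P 0 * P 0) * u (P 0 * g)
      + v (P 1) / u (P 1 * P 1) * u (P 1 * g) + v (P 2) / u (P 2 * P 2) * u (P 2 * g) := by
    intro g
    have : φ * g = (v (P 0) / u (P 0 * P 0)) • (P 0 * g)
        + (v (P 1) / u (P 1 * P 1)) • (P 1 * g) + (v (P 2) / u (P 2 * P 2)) • (P 2 * g) := by
      rw [hφdef, smul_eq_C_mul, smul_eq_C_mul, smul_eq_C_mul]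
      ring
    rw [this, map_add, map_add, map_smul, map_smul, map_smul, smul_eq_mul, smul_eq_mul,
      smul_eq_mul]
  -- v f = u (φ f)
  have hvP : ∀ f, v f = u (φ * f) := by
    apply func_ext P hP v (u.comp (LinearMap.mulLeft ℂ φ))
    intro n
    show v (P n) = u (φ * P n)
    match n with
    | 0 =>
      rw [hmul, hu.1 1 0 (by omega), hu.1 2 0 (by omega), mul_zero, mul_zero, add_zero,
        add_zero, div_mul_cancel₀ _ (hu.2 0)]
    | 1 =>
      rw [hmul, hu.1 0 1 (by omega), hu.1 2 1 (by omega), mul_zero, mul_zero, add_zero,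
        zero_add, div_mul_cancel₀ _ (hu.2 1)]
    | 2 =>
      rw [hmul, hu.1 0 2 (by omega), hu.1 1 2 (by omega), mul_zero, mul_zero, zero_add,
        zero_add, div_mul_cancel₀ _ (hu.2 2)]
    | (i+3) =>
      rw [hmul, hu.1 0 (i+3) (by omega), hu.1 1 (i+3) (by omega), hu.1 2 (i+3) (by omega),
        hvPn i]
      ring
  -- Pearson equation
  have hPear : ∀ f, u (φ * Dw ω f) = u (ψ * f) := by
    have hfx := func_ext P hP ((u.comp (LinearMap.mulLeft ℂ φ)).comp (DwL ω))
      (u.comp (LinearMap.mulLeft ℂ ψ)) ?_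
    · intro f; exact hfx f
    intro n
    show u (φ * Dw ω (P n)) = u (ψ * P n)
    have hψmul : ∀ g, u (ψ * g) = v 1 / u (P 1 * P 1) * u (P 1 * g) := by
      intro g
      have : ψ * g = (v 1 / u (P 1 * P 1)) • (P 1 * g) := by
        rw [hψdef, smul_eq_C_mul]; ring
      rw [this, map_smul, smul_eq_mul]
    rw [← hvP (Dw ω (P n))]
    match n with
    | 0 =>
      rw [hψmul, hu.1 1 0 (by omega), mul_zero, hP0, Dw_one, map_zero]
    | 1 =>
      have h := hPQ 0
      norm_num at h
      rw [h, hQ0, hψmul, div_mul_cancel₀ _ (hu.2 1)]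
    | (i+2) =>
      have h : Dw ω (P (i+2)) = ((↑(i+1):ℂ)+1) • Q (i+1) := hPQ (i+1)
      rw [h, map_smul, hψmul, hu.1 1 (i+2) (by omega), mul_zero]
      have hz : v (Q (i+1)) = 0 := by
        have := hv0 (i+1) 1 (by simp) (by simp [coeff_one])
        rwa [one_mul] at this
      rw [hz, smul_zero]
  refine ⟨φ, ψ, hvP, hPear, ?_, ?_⟩
  · rw [hφdef]
    apply le_trans (natDegree_add_le _ _)
    apply max_le
    · apply le_trans (natDegree_add_le _ _)
      apply max_le
      · exact le_trans (natDegree_C_mul_le _ _) (by rw [(hP 0).2]; omega)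
      · exact le_trans (natDegree_C_mul_le _ _) (by rw [(hP 1).2]; omega)
    · exact le_trans (natDegree_C_mul_le _ _) (by rw [(hP 2).2])
  · rw [hψdef]
    exact le_trans (natDegree_C_mul_le _ _) (by rw [(hP 1).2])

theorem higher_derivatives_are_Dw_classical
    (ω : ℂ) (hω : ω ≠ 0) (P : ℕ → Polynomial ℂ) (hP : MonicPS P)
    (u0 : Polynomial ℂ →ₗ[ℂ] ℂ) (hops : IsOPSwrt P u0)
    (Pk : ℕ → ℕ → Polynomial ℂ) (hPk0 : ∀ n, Pk 0 n = P n)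
    (hrec : ∀ k n : ℕ, Pk (k + 1) n = ((n : ℂ) + 1)⁻¹ • Dw ω (Pk k (n + 1)))
    (h1 : ∃ v, IsOPSwrt (Pk 1) v) :
    ∀ k : ℕ, 1 ≤ k →
      (∃ v, IsOPSwrt (Pk k) v) ∧ (∃ w, IsOPSwrt (Pk (k + 1)) w) := by
  have hmono : ∀ k, MonicPS (Pk k) := by
    intro k
    induction k with
    | zero => intro n; rw [hPk0 n]; exact hP n
    | succ k IH =>
      intro n
      rw [hrec k n]
      exact monic_smul_Dw ω hω (Pk k (n+1)) n (IH (n+1)).1 (IH (n+1)).2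
  have hDrel : ∀ k n, Dw ω (Pk k (n+1)) = ((n:ℂ)+1) • Pk (k+1) n := by
    intro k n
    rw [hrec k n, smul_smul, mul_inv_cancel₀ (natCast_succ_ne n), one_smul]
  have hInv : ∀ k : ℕ, ∃ (u v : Polynomial ℂ →ₗ[ℂ] ℂ) (φ ψ : Polynomial ℂ),
      IsOPSwrt (Pk k) u ∧ IsOPSwrt (Pk (k+1)) v ∧ (∀ f, v f = u (φ * f)) ∧
      (∀ f, u (φ * Dw ω f) = u (ψ * f)) ∧ φ.natDegree ≤ 2 ∧ ψ.natDegree ≤ 1 := by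
    intro k
    induction k with
    | zero =>
      obtain ⟨v1, hv1⟩ := h1
      have hu0 : IsOPSwrt (Pk 0) u0 := by
        constructor
        · intro n m hnm; rw [hPk0 n, hPk0 m]; exact hops.1 n m hnm
        · intro n; rw [hPk0 n]; exact hops.2 n
      obtain ⟨φ, ψ, h1', h2', h3', h4'⟩ := base_lemma ω hω (Pk 0) (Pk 1) (hmono 0) (hmono 1)
        u0 v1 hu0 hv1 (hDrel 0)
      exact ⟨u0, v1, φ, ψ, hu0, hv1, h1', h2', h3', h4'⟩
    | succ k IH =>
      obtain ⟨u, v, φ, ψ, hu, hv, hvu, hPear, hφ, hψ⟩ := IH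
      obtain ⟨w, hw, hwf, hPear', hφ', hψ'⟩ := step_lemma ω hω (Pk k) (Pk (k+1)) (Pk (k+2))
        (hmono k) (hmono (k+1)) (hmono (k+2)) u v φ ψ hu hv hvu hPear hφ hψ
        (hDrel k) (hDrel (k+1))
      exact ⟨v, w, φ.comp (X + C ω), ψ - Dw ω φ, hv, hw, hwf, hPear', hφ', hψ'⟩
  intro k hk
  obtain ⟨u, v, _, _, hu, hv, _⟩ := hInv k
  exact ⟨⟨u, hu⟩, ⟨v, hv⟩⟩
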